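/- Let τ be a nonnegative integer with τ < deg(m_i) for all i ∈ {1, …, L} and τ < τ_{1(⌊(w^{(1)} − 1)/2⌋ + 1)}. Then every c(x) ∈ F[x] with deg(c) < deg(M) such that deg([c]_{m_i}) ≤ τ for all i ∈ {1, …, L} satisfies deg(c) ≤ τ. (Equivalently: whenever all residues of a polynomial a(x) with deg(a) < deg(M) are corrupted by errors of degree at most τ, the folding polynomial k_1(x) determined by a = k_1·m_1 + [a]_{m_1} is uniquely recoverable from the corrupted residues, giving a reconstruction whose error has degree at most τ.) -/

import Mathlib

open Polynomial
open scoped Classical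

/-- The code distance of the polynomial remainder code with moduli `m i`, `i ∈ s`. -/
noncomputable def codeDist {F : Type*} [Field F] {ι : Type*} (s : Finset ι)
    (m : ι → Polynomial F) : ℕ :=
  sInf {k | ∃ a : Polynomial F, a ≠ 0 ∧ a.degree < (s.lcm m).degree ∧
    (s.filter fun i => ¬ m i ∣ a).card = k}

/-- The `j`-th smallest element (1-indexed) of a multiset of natural numbers. -/
noncomputable def nthSmallest (s : Multiset ℕ) (j : ℕ) : ℕ :=
  (s.sort (· ≤ ·)).getD (j - 1) 0

lemma sorted_getD_le (τ : ℕ) : ∀ (l : List ℕ), l.Pairwise (· ≤ ·) → ∀ b : ℕ,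
    b + 1 ≤ (l.filter (fun x => x ≤ τ)).length → l.getD b 0 ≤ τ := by
  intro l
  induction l with
  | nil => simp
  | cons x xs ih =>
    intro hl b hb
    have hx : ∀ y ∈ xs, x ≤ y := (List.pairwise_cons.mp hl).1
    have hxs : xs.Pairwise (· ≤ ·) := (List.pairwise_cons.mp hl).2
    by_cases hxτ : x ≤ τ
    · cases b with
      | zero => simpa using hxτ
      | succ b =>
        have hlen : b + 1 ≤ (xs.filter (fun x => x ≤ τ)).length := by
          rw [List.filter_cons_of_pos (by simpa using hxτ)] at hb
          simpa using Nat.le_of_succ_le_succ hb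
        simpa using ih hxs b hlen
    · exfalso
      rw [List.filter_cons_of_neg (by simpa using hxτ)] at hb
      have hlen : 0 < (xs.filter (fun x => x ≤ τ)).length := lt_of_lt_of_le (Nat.succ_pos b) hb
      rw [List.length_pos_iff] at hlen
      obtain ⟨y, hy⟩ := List.exists_mem_of_ne_nil _ hlen
      have hy' := List.mem_filter.mp hy
      exact hxτ (le_trans (hx y hy'.1) (by simpa using hy'.2))

lemma card_filter_le_of_lt_nthSmallest (s : Multiset ℕ) (b τ : ℕ)
    (h : τ < nthSmallest s (b + 1)) :
    (s.filter (fun x => x ≤ τ)).card ≤ b := by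
  by_contra hcon
  push_neg at hcon
  refine absurd h (not_lt.mpr ?_)
  unfold nthSmallest
  simp only [Nat.add_sub_cancel]
  apply sorted_getD_le τ _ (Multiset.pairwise_sort _ _) b
  have key : (↑((Multiset.sort s (· ≤ ·)).filter (fun x => x ≤ τ)) : Multiset ℕ)
      = s.filter (fun x => x ≤ τ) := by
    rw [← Multiset.filter_coe, Multiset.sort_eq]
  have : ((Multiset.sort s (· ≤ ·)).filter (fun x => x ≤ τ)).length
      = (s.filter (fun x => x ≤ τ)).card := by
    rw [← key]; simp
  omega

lemma gcd_monic_of_left_ne_zero {F : Type*} [Field F] {p q : Polynomial F} (hp : p ≠ 0) :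
    (gcd p q).Monic := by
  have hd0 : gcd p q ≠ 0 := fun h0 => hp ((gcd_eq_zero_iff p q).mp h0).1
  have := monic_normalize (p := gcd p q) hd0
  rwa [normalize_gcd] at this

lemma eq_gcd_mul_div {F : Type*} [Field F] {p q : Polynomial F} (hp : p ≠ 0) :
    q = gcd p q * (q /ₘ gcd p q) := by
  have hdmonic : (gcd p q).Monic := gcd_monic_of_left_ne_zero hp
  conv_lhs => rw [← modByMonic_add_div q (gcd p q)]
  rw [(modByMonic_eq_zero_iff_dvd hdmonic).mpr (gcd_dvd_right p q), zero_add]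

lemma gamma_dvd {F : Type*} [Field F] {p q k : Polynomial F} (hp : p.Monic)
    (h : q ∣ p * k) : q /ₘ gcd p q ∣ k := by
  classical
  have hp0 : p ≠ 0 := hp.ne_zero
  set d := gcd p q with hd
  have hd0 : d ≠ 0 := fun h0 => hp0 ((gcd_eq_zero_iff p q).mp h0).1
  have hdmonic : d.Monic := gcd_monic_of_left_ne_zero hp0
  have hA : p = d * (p /ₘ d) := by
    conv_lhs => rw [← modByMonic_add_div p d]
    rw [(modByMonic_eq_zero_iff_dvd hdmonic).mpr (gcd_dvd_left p q), zero_add]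
  have hG : q = d * (q /ₘ d) := eq_gcd_mul_div hp0
  set A := p /ₘ d with hAdef
  set G := q /ₘ d with hGdef
  have hrel : IsRelPrime G A := by
    rw [← gcd_isUnit_iff_isRelPrime]
    have h1 : gcd (d * A) (d * G) = normalize d * gcd A G := gcd_mul_left d A G
    rw [← hA, ← hG, ← hd, hdmonic.normalize_eq_self] at h1
    have h2 : d * 1 = d * gcd A G := by rw [mul_one]; exact h1
    have h3 : gcd A G = 1 := (mul_left_cancel₀ hd0 h2).symm
    rw [gcd_comm G A, h3]
    exact isUnit_one
  have h2 : d * G ∣ d * (A * k) := by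
    have : d * (A * k) = p * k := by rw [hA]; ring
    rw [this, ← hG]
    exact h
  exact hrel.dvd_of_dvd_mul_left ((mul_dvd_mul_iff_left hd0).mp h2)

/-- robust CRT for polynomials with the first modulus as reference.
If `τ < τ_{1(⌊(w⁽¹⁾−1)/2⌋+1)}` (and `τ < deg m_i` for all `i`), then any `c` with
`deg c < deg M` all of whose residues `[c]_{m_i}` have degree at most `τ`
itself has degree at most `τ`. -/
theorem stmt5 {F : Type*} [Field F] {L : ℕ} (hL : 2 ≤ L)
    (m : Fin L → Polynomial F)
    (hmonic : ∀ i, (m i).Monic)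
    (hdist : Function.Injective m)
    (hdeg : ∀ i, 0 < (m i).degree)
    (hm_lt : ∀ i, (m i).degree < (Finset.univ.lcm m).degree)
    (i0 : Fin L) (hi0 : i0 = ⟨0, by omega⟩)
    (w1 : ℕ)
    (hw1 : w1 = codeDist (Finset.univ.erase i0)
      (fun j => m j /ₘ gcd (m i0) (m j)))
    (τ : ℕ)
    (hτm : ∀ i, (τ : WithBot ℕ) < (m i).degree)
    (hτ : τ < nthSmallest
      ((Finset.univ.erase i0).val.map fun k => (gcd (m i0) (m k)).natDegree)
      ((w1 - 1) / 2 + 1)) :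
    ∀ c : Polynomial F, c.degree < (Finset.univ.lcm m).degree →
      (∀ i, (c %ₘ m i).degree ≤ (τ : WithBot ℕ)) →
      c.degree ≤ (τ : WithBot ℕ) := by
  classical
  intro c hc hres
  set M := Finset.univ.lcm m with hM
  set r := c %ₘ m i0 with hr
  have hm0 : ∀ i, m i ≠ 0 := fun i => (hmonic i).ne_zero
  have hMne : M ≠ 0 := by
    intro h0
    have := hm_lt i0
    rw [h0, degree_zero] at this
    exact (not_lt_bot this)
  have hsub : ∀ j, m j ∣ c - c %ₘ m j := fun j =>
    ⟨c /ₘ m j, by rw [sub_eq_iff_eq_add, add_comm]; exact (modByMonic_add_div c (m j)).symm⟩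
  have hgood : ∀ j, τ < (gcd (m i0) (m j)).natDegree → m j ∣ c - r := by
    intro j hj
    have hd0 : gcd (m i0) (m j) ≠ 0 := fun h0 => hm0 i0 ((gcd_eq_zero_iff _ _).mp h0).1
    have hdd : (τ : WithBot ℕ) < (gcd (m i0) (m j)).degree := by
      rw [degree_eq_natDegree hd0]; exact_mod_cast hj
    have h1 : gcd (m i0) (m j) ∣ c - r := dvd_trans (gcd_dvd_left _ _) (hsub i0)
    have h2 : gcd (m i0) (m j) ∣ c - c %ₘ m j := dvd_trans (gcd_dvd_right _ _) (hsub j)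
    have h3 : gcd (m i0) (m j) ∣ (c %ₘ m j) - r := by
      have heq : (c %ₘ m j) - r = (c - r) - (c - c %ₘ m j) := by ring
      rw [heq]; exact dvd_sub h1 h2
    have h4 : ((c %ₘ m j) - r).degree < (gcd (m i0) (m j)).degree :=
      lt_of_le_of_lt (le_trans (degree_sub_le _ _) (max_le (hres j) (hres i0))) hdd
    have h6 : c %ₘ m j = r := sub_eq_zero.mp (eq_zero_of_dvd_of_degree_lt h3 h4)
    exact h6 ▸ hsub j
  by_cases hk0 : c - r = 0
  · rw [sub_eq_zero.mp hk0]; exact hres i0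
  · exfalso
    obtain ⟨k1, hk1⟩ : m i0 ∣ c - r := hsub i0
    have hk10 : k1 ≠ 0 := fun h0 => hk0 (by rw [hk1, h0, mul_zero])
    set Γ : Fin L → Polynomial F := fun j => m j /ₘ gcd (m i0) (m j) with hΓ
    set lc := (Finset.univ.erase i0).lcm Γ with hlc
    have hΓ0 : ∀ j, Γ j ≠ 0 := by
      intro j h0
      apply hm0 j
      have h0' : m j /ₘ gcd (m i0) (m j) = 0 := h0
      rw [eq_gcd_mul_div (p := m i0) (q := m j) (hm0 i0), h0', mul_zero]
    have hlcne : lc ≠ 0 := by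
      rw [hlc, Ne, Finset.lcm_eq_zero_iff]
      rintro ⟨j, _, hj⟩
      exact hΓ0 j hj
    have hMdvd : M ∣ m i0 * lc := by
      apply Finset.lcm_dvd
      intro j _
      by_cases hji : j = i0
      · subst hji; exact dvd_mul_right _ _
      · have hdj : m j = gcd (m i0) (m j) * Γ j := eq_gcd_mul_div (hm0 i0)
        have hstep : m j ∣ m i0 * Γ j := by
          obtain ⟨A, hA⟩ := gcd_dvd_left (m i0) (m j)
          refine ⟨A, ?_⟩
          calc m i0 * Γ j = gcd (m i0) (m j) * A * Γ j := by rw [← hA]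
            _ = gcd (m i0) (m j) * Γ j * A := by ring
            _ = m j * A := by rw [← hdj]
        exact hstep.trans (mul_dvd_mul_left _
          (Finset.dvd_lcm (Finset.mem_erase.mpr ⟨hji, Finset.mem_univ j⟩)))
    have hne : m i0 * lc ≠ 0 := mul_ne_zero (hm0 i0) hlcne
    have hdegM : M.degree ≤ (m i0).degree + lc.degree := by
      have := degree_le_of_dvd hMdvd hne
      rwa [degree_mul] at this
    have hcr : (c - r).degree < M.degree := by
      have h1 : r.degree < M.degree :=
        lt_of_le_of_lt (hres i0) (lt_trans (hτm i0) (hm_lt i0))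
      exact lt_of_le_of_lt (degree_sub_le _ _) (max_lt hc h1)
    have hk1deg : k1.degree < lc.degree := by
      have hlt : (m i0).degree + k1.degree < (m i0).degree + lc.degree := by
        rw [← degree_mul, ← hk1]; exact lt_of_lt_of_le hcr hdegM
      have hb : (m i0).degree ≠ ⊥ := by
        rw [degree_eq_natDegree (hm0 i0)]; exact WithBot.coe_ne_bot
      exact (WithBot.add_lt_add_iff_left hb).mp hlt
    set N := (Finset.univ.erase i0).filter (fun j => ¬ Γ j ∣ k1) with hN
    have hwN : w1 ≤ N.card := by
      rw [hw1]
      exact Nat.sInf_le ⟨k1, hk10, hk1deg, rfl⟩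
    set B := (Finset.univ.erase i0).filter (fun j => (gcd (m i0) (m j)).natDegree ≤ τ) with hB
    have hNB : N ⊆ B := by
      intro j hj
      rw [hN, Finset.mem_filter] at hj
      obtain ⟨hj1, hj2⟩ := hj
      rw [hB, Finset.mem_filter]
      refine ⟨hj1, ?_⟩
      by_contra hcon
      push_neg at hcon
      apply hj2
      have hdvd : m j ∣ m i0 * k1 := by rw [← hk1]; exact hgood j hcon
      exact gamma_dvd (hmonic i0) hdvd
    have hBcard : B.card ≤ (w1 - 1) / 2 := by
      have hmain := card_filter_le_of_lt_nthSmallest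
        ((Finset.univ.erase i0).val.map fun k => (gcd (m i0) (m k)).natDegree)
        ((w1 - 1) / 2) τ hτ
      have heq : (((Finset.univ.erase i0).val.map fun k => (gcd (m i0) (m k)).natDegree).filter
          (fun x => x ≤ τ)).card = B.card := by
        rw [Multiset.filter_map, Multiset.card_map]
        rw [hB, Finset.card_def, Finset.filter_val]
        congr 1
      omega
    have hNcard : N.card ≤ (w1 - 1) / 2 := le_trans (Finset.card_le_card hNB) hBcard
    have hNempty : N.card = 0 := by omega
    have hall : ∀ j ∈ Finset.univ.erase i0, Γ j ∣ k1 := by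
      intro j hj
      by_contra hcon
      have hmem : j ∈ N := by rw [hN, Finset.mem_filter]; exact ⟨hj, hcon⟩
      have := Finset.card_eq_zero.mp hNempty
      rw [this] at hmem
      exact absurd hmem (Finset.notMem_empty j)
    have hdvd : lc ∣ k1 := Finset.lcm_dvd hall
    exact hk10 (eq_zero_of_dvd_of_degree_lt hdvd hk1deg)
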